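/- The set of D∃∀ formulas (formulas equivalent to disjunctions of ∃∀-formulas) is closed under disjunction, conjunction, and existential quantification. -/

import Mathlib

/-- Syntax of the temporal logic TL(U,S) with strict Until and strict Since. -/
inductive TL (σ : Type) : Type
  | tt : TL σ
  | atom : σ → TL σ
  | neg : TL σ → TL σ
  | or : TL σ → TL σ → TL σ
  | and : TL σ → TL σ → TL σ
  | until_ : TL σ → TL σ → TL σ
  | since : TL σ → TL σ → TL σ

/-- Semantics of TL(U,S) over a chain: a linear order `T` with interpretation `I`. -/
def TL.sat {σ T : Type} [LinearOrder T] (I : σ → Set T) : TL σ → T → Prop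
  | .tt, _ => True
  | .atom p, t => t ∈ I p
  | .neg F, t => ¬ TL.sat I F t
  | .or F G, t => TL.sat I F t ∨ TL.sat I G t
  | .and F G, t => TL.sat I F t ∧ TL.sat I G t
  | .until_ F G, t => ∃ t', t < t' ∧ TL.sat I G t' ∧ ∀ s, t < s → s < t' → TL.sat I F s
  | .since F G, t => ∃ t', t' < t ∧ TL.sat I G t' ∧ ∀ s, t' < s → s < t → TL.sat I F s

/-- K⁻(F) := ¬((¬F) S True). -/
def TL.kminus {σ : Type} (F : TL σ) : TL σ := .neg (.since (.neg F) .tt)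

/-- K⁺(F) := ¬((¬F) U True). -/
def TL.kplus {σ : Type} (F : TL σ) : TL σ := .neg (.until_ (.neg F) .tt)

/-- G F := ¬(True U ¬F): F holds everywhere strictly after the current point. -/
def TL.G {σ : Type} (F : TL σ) : TL σ := .neg (.until_ .tt (.neg F))

/-- G⁻ F := ¬(True S ¬F): F holds everywhere strictly before the current point. -/
def TL.Gm {σ : Type} (F : TL σ) : TL σ := .neg (.since .tt (.neg F))

/-- Syntax of FOMLO: first-order monadic logic of order (variables are natural numbers). -/
inductive FO (σ : Type) : Type
  | lt : ℕ → ℕ → FO σ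
  | eq : ℕ → ℕ → FO σ
  | atom : σ → ℕ → FO σ
  | neg : FO σ → FO σ
  | or : FO σ → FO σ → FO σ
  | and : FO σ → FO σ → FO σ
  | ex : ℕ → FO σ → FO σ
  | all : ℕ → FO σ → FO σ

/-- Semantics of FOMLO over a chain, with a valuation of the variables. -/
def FO.sat {σ T : Type} [LinearOrder T] (I : σ → Set T) : FO σ → (ℕ → T) → Prop
  | .lt i j, v => v i < v j
  | .eq i j, v => v i = v j
  | .atom p i, v => v i ∈ I p
  | .neg φ, v => ¬ FO.sat I φ v
  | .or φ ψ, v => FO.sat I φ v ∨ FO.sat I ψ v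
  | .and φ ψ, v => FO.sat I φ v ∧ FO.sat I ψ v
  | .ex i φ, v => ∃ t, FO.sat I φ (Function.update v i t)
  | .all i φ, v => ∀ t, FO.sat I φ (Function.update v i t)

/-- Free variables of a FOMLO formula. -/
def FO.freeVars {σ : Type} : FO σ → Set ℕ
  | .lt i j => {i, j}
  | .eq i j => {i, j}
  | .atom _ i => {i}
  | .neg φ => φ.freeVars
  | .or φ ψ => φ.freeVars ∪ ψ.freeVars
  | .and φ ψ => φ.freeVars ∪ ψ.freeVars
  | .ex i φ => φ.freeVars \ {i}
  | .all i φ => φ.freeVars \ {i}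

/-- Quantifier-free one-variable (propositional) formulas over the monadic predicates. -/
inductive QF (σ : Type) : Type
  | tt : QF σ
  | atom : σ → QF σ
  | neg : QF σ → QF σ
  | or : QF σ → QF σ → QF σ
  | and : QF σ → QF σ → QF σ

def QF.sat {σ T : Type} (I : σ → Set T) : QF σ → T → Prop
  | .tt, _ => True
  | .atom p, t => t ∈ I p
  | .neg φ, t => ¬ QF.sat I φ t
  | .or φ ψ, t => QF.sat I φ t ∨ QF.sat I ψ t
  | .and φ ψ, t => QF.sat I φ t ∧ QF.sat I ψ t

/-- The propositional temporal formula corresponding to a quantifier-free formula. -/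
def QF.toTL {σ : Type} : QF σ → TL σ
  | .tt => .tt
  | .atom p => .atom p
  | .neg φ => .neg φ.toTL
  | .or φ ψ => .or φ.toTL ψ.toTL
  | .and φ ψ => .and φ.toTL ψ.toTL

/-- An ∃∀-formula over the monadic signature `σ` with free variables `z₀,…,z_m`:
`∃ x_n … x₀, (⋀_k z_k = x_{idx k}) ∧ x₀ < … < x_n ∧ ⋀_j α_j(x_j) ∧`
each `βmid j` holds throughout the open interval `(x_j, x_{j+1})`,
`βhi` holds everywhere after `x_n`, and `βlo` holds everywhere before `x₀`. -/
structure EAForm (σ : Type) (m : ℕ) where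
  n : ℕ
  idx : Fin (m + 1) → Fin (n + 1)
  α : Fin (n + 1) → QF σ
  βmid : Fin n → QF σ
  βlo : QF σ
  βhi : QF σ

/-- Semantics of ∃∀-formulas. -/
def EAForm.sat {σ : Type} {m : ℕ} {T : Type} [LinearOrder T] (e : EAForm σ m)
    (I : σ → Set T) (z : Fin (m + 1) → T) : Prop :=
  ∃ x : Fin (e.n + 1) → T, StrictMono x ∧
    (∀ k, z k = x (e.idx k)) ∧
    (∀ j, (e.α j).sat I (x j)) ∧
    (∀ j : Fin e.n, ∀ y, x j.castSucc < y → y < x j.succ → (e.βmid j).sat I y) ∧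
    (∀ y, y < x 0 → e.βlo.sat I y) ∧
    (∀ y, x (Fin.last e.n) < y → e.βhi.sat I y)

/-- Satisfaction of a disjunction of ∃∀-formulas. -/
def EADisj {σ : Type} {m : ℕ} {T : Type} [LinearOrder T] (L : List (EAForm σ m))
    (I : σ → Set T) (z : Fin (m + 1) → T) : Prop :=
  ∃ f ∈ L, f.sat I z

/-- A linear order is Dedekind complete if every nonempty bounded-above subset has a
least upper bound and every nonempty bounded-below subset has a greatest lower bound. -/
def DedekindComplete (T : Type) [LinearOrder T] : Prop :=
  (∀ S : Set T, S.Nonempty → BddAbove S → ∃ a, IsLUB S a) ∧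
  (∀ S : Set T, S.Nonempty → BddBelow S → ∃ a, IsGLB S a)

/-- The canonical TL(U,S)-expansion of a chain: one unary predicate for each
TL(U,S)-formula `A`, interpreted as the set of points satisfying `A`. -/
def canonExp {σ T : Type} [LinearOrder T] (I : σ → Set T) : TL σ → Set T :=
  fun A => {t | A.sat I t}

/-- `[α₀,β₁,α₁,…,β_n,α_n](z₀,z₁)` : there are `z₀ = x₀ < x₁ < … < x_n = z₁` with each
`a j` holding at `x_j` and `b j` holding throughout `(x_j, x_{j+1})`
(`b j` stands for `β_{j+1}`). -/
def chainSat {σ T : Type} [LinearOrder T] (I : σ → Set T) (n : ℕ) (a b : ℕ → QF σ)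
    (z₀ z₁ : T) : Prop :=
  ∃ x : Fin (n + 1) → T, x 0 = z₀ ∧ x (Fin.last n) = z₁ ∧ StrictMono x ∧
    (∀ j : Fin (n + 1), (a j.val).sat I (x j)) ∧
    (∀ j : Fin n, ∀ y, x j.castSucc < y → y < x j.succ → (b j.val).sat I y)

/-- `nestU [(B₁,A₁),…,(B_k,A_k)] tail = B₁ U (A₁ ∧ (B₂ U (A₂ ∧ … (B_k U (A_k ∧ tail))…)))`. -/
def nestU {σ : Type} : List (TL σ × TL σ) → TL σ → TL σ
  | [], tail => tail
  | (B, A) :: rest, tail => B.until_ (A.and (nestU rest tail))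

/-- `nestS [(B₁,A₁),…,(B_k,A_k)] tail = B₁ S (A₁ ∧ (B₂ S (A₂ ∧ … (B_k S (A_k ∧ tail))…)))`. -/
def nestS {σ : Type} : List (TL σ × TL σ) → TL σ → TL σ
  | [], tail => tail
  | (B, A) :: rest, tail => B.since (A.and (nestS rest tail))

/-- `α_i` as a temporal formula, extended by `True` out of range. -/
def EAForm.aExt {σ : Type} {m : ℕ} (e : EAForm σ m) (i : ℕ) : TL σ :=
  if h : i < e.n + 1 then (e.α ⟨i, h⟩).toTL else .tt

/-- `β_{i+1}` (interval `(x_i, x_{i+1})`) as a temporal formula, `True` out of range. -/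
def EAForm.bExt {σ : Type} {m : ℕ} (e : EAForm σ m) (i : ℕ) : TL σ :=
  if h : i < e.n then (e.βmid ⟨i, h⟩).toTL else .tt

/-- The future part `A_k ∧ (B_{k+1} U (A_{k+1} ∧ … (A_n ∧ G B_{n+1})…))` of the
translation of a one-free-variable ∃∀-formula (with `z₀ = x_k`). -/
def EAForm.futureTL {σ : Type} (e : EAForm σ 0) : TL σ :=
  (e.aExt (e.idx 0).val).and
    (nestU (List.ofFn (fun j : Fin (e.n - (e.idx 0).val) =>
        (e.bExt ((e.idx 0).val + j.val), e.aExt ((e.idx 0).val + j.val + 1))))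
      e.βhi.toTL.G)

/-- The past part `A_k ∧ (B_k S (A_{k-1} ∧ … (A₀ ∧ G⁻ B₀)…))` of the translation. -/
def EAForm.pastTL {σ : Type} (e : EAForm σ 0) : TL σ :=
  (e.aExt (e.idx 0).val).and
    (nestS (List.ofFn (fun j : Fin (e.idx 0).val =>
        (e.bExt ((e.idx 0).val - 1 - j.val), e.aExt ((e.idx 0).val - 1 - j.val))))
      e.βlo.toTL.Gm)

/-- `Fseq a b n j` is the temporal formula `F_{n-j}` where `F_n := α_n` and
`F_{i-1} := α_{i-1} ∧ (β_i U F_i)`; here `b i` stands for `β_{i+1}`. -/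
def Fseq {σ : Type} (a b : ℕ → QF σ) (n : ℕ) : ℕ → TL σ
  | 0 => (a n).toTL
  | j + 1 => ((a (n - j - 1)).toTL).and (((b (n - j - 1)).toTL).until_ (Fseq a b n j))

/-- Syntax of the temporal logic TL(U,K⁻) with strict Until and the modality K⁻. -/
inductive TLK (σ : Type) : Type
  | tt : TLK σ
  | atom : σ → TLK σ
  | neg : TLK σ → TLK σ
  | or : TLK σ → TLK σ → TLK σ
  | and : TLK σ → TLK σ → TLK σ
  | until_ : TLK σ → TLK σ → TLK σ
  | kminus : TLK σ → TLK σ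

/-- Semantics of TL(U,K⁻): `K⁻(F)` holds at `t` iff `t = sup{t' < t : F(t')}`. -/
def TLK.sat {σ T : Type} [LinearOrder T] (I : σ → Set T) : TLK σ → T → Prop
  | .tt, _ => True
  | .atom p, t => t ∈ I p
  | .neg F, t => ¬ TLK.sat I F t
  | .or F G, t => TLK.sat I F t ∨ TLK.sat I G t
  | .and F G, t => TLK.sat I F t ∧ TLK.sat I G t
  | .until_ F G, t => ∃ t', t < t' ∧ TLK.sat I G t' ∧ ∀ s, t < s → s < t' → TLK.sat I F s
  | .kminus F, t => IsLUB {t' | t' < t ∧ TLK.sat I F t'} t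

/-- Syntactically future TL(U,K⁻) formulas: Boolean combinations of atoms and
Until-formulas. -/
inductive SynFuture {σ : Type} : TLK σ → Prop
  | tt : SynFuture .tt
  | atom (p : σ) : SynFuture (.atom p)
  | until_ (F G : TLK σ) : SynFuture (.until_ F G)
  | neg {F} : SynFuture F → SynFuture (.neg F)
  | or {F G} : SynFuture F → SynFuture G → SynFuture (.or F G)
  | and {F G} : SynFuture F → SynFuture G → SynFuture (.and F G)

/-- The subchain of a chain restricted to `[t₀,∞)`: the interpretation induced on the
subtype `{t // t₀ ≤ t}`. -/
def restrictI {σ T : Type} (I : σ → Set T) [LinearOrder T] (t₀ : T) :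
    σ → Set {t : T // t₀ ≤ t} :=
  fun p => {s | s.val ∈ I p}

/-- A (z₀,z₁)-∃∀ formula: either `z₀ > z₁`, or `z₀ = z₁`, or a formula
`[α₀,β₁,…,β_n,α_n](z₀,z₁)`. -/
inductive IntervalEA (σ : Type) : Type
  | gt : IntervalEA σ
  | eq : IntervalEA σ
  | chain (n : ℕ) (a b : ℕ → QF σ) : IntervalEA σ

def IntervalEA.sat {σ T : Type} [LinearOrder T] (I : σ → Set T) :
    IntervalEA σ → T → T → Prop
  | .gt, z₀, z₁ => z₁ < z₀
  | .eq, z₀, z₁ => z₀ = z₁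
  | .chain n a b, z₀, z₁ => chainSat I n a b z₀ z₁

/-! ### Auxiliary development for Statement 7 -/

/-- Option-valued search for the first index satisfying `p`. -/
def optFind {n : ℕ} (p : Fin n → Prop) [DecidablePred p] : Option (Fin n) :=
  Fin.find? (fun i => decide (p i))

theorem optFind_spec {n : ℕ} (p : Fin n → Prop) [DecidablePred p] {i : Fin n}
    (h : i ∈ optFind p) : p i := by
  unfold optFind at h
  have := (Fin.find?_eq_some_iff.mp (Option.mem_def.mp h)).1
  simpa using this

theorem optFind_eq_none_iff {n : ℕ} {p : Fin n → Prop} [DecidablePred p] :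
    optFind p = none ↔ ∀ i, ¬ p i := by
  unfold optFind
  rw [Fin.find?_eq_none_iff]
  simp

open Classical in
/-- Quantifier-free formula holding at merged point `j` required by side with point map `f`. -/
noncomputable def sideAt {σ : Type} {n N : ℕ} (f : Fin (n + 1) → Fin (N + 1))
    (α : Fin (n + 1) → QF σ) (βmid : Fin n → QF σ) (βlo βhi : QF σ) (j : Fin (N + 1)) : QF σ :=
  match optFind (fun i => f i = j) with
  | some i => α i
  | none =>
    if j < f 0 then βlo
    else if f (Fin.last n) < j then βhi
    else
      match optFind (fun i : Fin n => f i.castSucc < j ∧ j < f i.succ) with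
      | some i => βmid i
      | none => .tt

open Classical in
/-- Quantifier-free formula holding on merged interval `(y j, y (j+1))`. -/
noncomputable def sideBetween {σ : Type} {n N : ℕ} (f : Fin (n + 1) → Fin (N + 1))
    (βmid : Fin n → QF σ) (βlo βhi : QF σ) (j : Fin N) : QF σ :=
  if j.succ ≤ f 0 then βlo
  else if f (Fin.last n) ≤ j.castSucc then βhi
  else
    match optFind (fun i : Fin n => f i.castSucc ≤ j.castSucc ∧ j.succ ≤ f i.succ) with
    | some i => βmid i
    | none => .tt

/-- The merged ∃∀-formula for a merge pattern `(f, g)`. -/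
noncomputable def mergeForm {σ : Type} {m : ℕ} (e₁ e₂ : EAForm σ m) (N : ℕ)
    (f : Fin (e₁.n + 1) → Fin (N + 1)) (g : Fin (e₂.n + 1) → Fin (N + 1)) : EAForm σ m where
  n := N
  idx := fun k => f (e₁.idx k)
  α := fun j => (sideAt f e₁.α e₁.βmid e₁.βlo e₁.βhi j).and (sideAt g e₂.α e₂.βmid e₂.βlo e₂.βhi j)
  βmid := fun j =>
    (sideBetween f e₁.βmid e₁.βlo e₁.βhi j).and (sideBetween g e₂.βmid e₂.βlo e₂.βhi j)
  βlo := e₁.βlo.and e₂.βlo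
  βhi := e₁.βhi.and e₂.βhi

/-- Validity of a merge pattern. -/
def goodPat {σ : Type} {m : ℕ} (e₁ e₂ : EAForm σ m) (N : ℕ)
    (f : Fin (e₁.n + 1) → Fin (N + 1)) (g : Fin (e₂.n + 1) → Fin (N + 1)) : Prop :=
  StrictMono f ∧ StrictMono g ∧ (∀ j, (∃ i, f i = j) ∨ (∃ i, g i = j)) ∧
    ∀ k, f (e₁.idx k) = g (e₂.idx k)

open Classical in
/-- All merged forms for a pair of ∃∀-formulas. -/
noncomputable def conjList {σ : Type} {m : ℕ} (e₁ e₂ : EAForm σ m) : List (EAForm σ m) :=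
  (List.range (e₁.n + e₂.n + 2)).flatMap fun N =>
    ((Finset.univ :
        Finset ((Fin (e₁.n + 1) → Fin (N + 1)) × (Fin (e₂.n + 1) → Fin (N + 1)))).filter
      (fun fg => goodPat e₁ e₂ N fg.1 fg.2)).toList.map fun fg => mergeForm e₁ e₂ N fg.1 fg.2

lemma mergeForm_mem_conjList {σ : Type} {m : ℕ} (e₁ e₂ : EAForm σ m) (N : ℕ)
    (hN : N < e₁.n + e₂.n + 2) (f : Fin (e₁.n + 1) → Fin (N + 1))
    (g : Fin (e₂.n + 1) → Fin (N + 1)) (h : goodPat e₁ e₂ N f g) :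
    mergeForm e₁ e₂ N f g ∈ conjList e₁ e₂ := by
  classical
  simp only [conjList, List.mem_flatMap, List.mem_range, List.mem_map, Finset.mem_toList,
    Finset.mem_filter, Finset.mem_univ, true_and]
  exact ⟨N, hN, ⟨f, g⟩, h, rfl⟩
set_option linter.unusedSectionVars false
section
variable {σ T : Type} [LinearOrder T] {I : σ → Set T}

lemma qf_tt_sat (t : T) : (QF.tt : QF σ).sat I t := trivial

variable {n N : ℕ} {f : Fin (n + 1) → Fin (N + 1)} {y : Fin (N + 1) → T}
  {α : Fin (n + 1) → QF σ} {βmid : Fin n → QF σ} {βlo βhi : QF σ}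

/-- Forward direction at points: if the side conditions hold along `y ∘ f`,
then `sideAt` holds at each merged point. -/
lemma sideAt_sat_fwd (hy : StrictMono y)
    (hα : ∀ i, (α i).sat I (y (f i)))
    (hmid : ∀ i : Fin n, ∀ t, y (f i.castSucc) < t → t < y (f i.succ) → (βmid i).sat I t)
    (hlo : ∀ t, t < y (f 0) → βlo.sat I t)
    (hhi : ∀ t, y (f (Fin.last n)) < t → βhi.sat I t)
    (j : Fin (N + 1)) : (sideAt f α βmid βlo βhi j).sat I (y j) := by
  classical
  unfold sideAt
  rcases hfind : optFind (fun i => f i = j) with _ | i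
  · simp only
    split_ifs with h1 h2
    · exact hlo _ (hy h1)
    · exact hhi _ (hy h2)
    · rcases hfind2 : optFind (fun i : Fin n => f i.castSucc < j ∧ j < f i.succ) with _ | i
      · exact trivial
      · have hsp := optFind_spec _ (Option.mem_def.mpr hfind2)
        exact hmid i _ (hy hsp.1) (hy hsp.2)
  · have hsp : f i = j := optFind_spec (fun i => f i = j) (Option.mem_def.mpr hfind)
    simpa only [hsp] using hα i

/-- Forward direction on intervals. -/
lemma sideBetween_sat_fwd (hy : StrictMono y)
    (hmid : ∀ i : Fin n, ∀ t, y (f i.castSucc) < t → t < y (f i.succ) → (βmid i).sat I t)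
    (hlo : ∀ t, t < y (f 0) → βlo.sat I t)
    (hhi : ∀ t, y (f (Fin.last n)) < t → βhi.sat I t)
    (j : Fin N) (t : T) (h₁ : y j.castSucc < t) (h₂ : t < y j.succ) :
    (sideBetween f βmid βlo βhi j).sat I t := by
  classical
  unfold sideBetween
  split_ifs with h1 h2
  · exact hlo _ (lt_of_lt_of_le h₂ (hy.monotone h1))
  · exact hhi _ (lt_of_le_of_lt (hy.monotone h2) h₁)
  · rcases hfind : optFind (fun i : Fin n => f i.castSucc ≤ j.castSucc ∧ j.succ ≤ f i.succ)
      with _ | i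
    · exact trivial
    · have hsp := optFind_spec _ (Option.mem_def.mpr hfind)
      exact hmid i _ (lt_of_le_of_lt (hy.monotone hsp.1) h₁) (lt_of_lt_of_le h₂ (hy.monotone hsp.2))

end
section
variable {σ T : Type} [LinearOrder T] {I : σ → Set T}
variable {n N : ℕ} {f : Fin (n + 1) → Fin (N + 1)} {y : Fin (N + 1) → T}
  {α : Fin (n + 1) → QF σ} {βmid : Fin n → QF σ} {βlo βhi : QF σ}

omit [LinearOrder T] in
lemma exists_max_le' [LinearOrder T] (_hy : StrictMono y) (t : T) (h0 : y 0 ≤ t) :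
    ∃ j₀ : Fin (N + 1), y j₀ ≤ t ∧ ∀ j, j₀ < j → t < y j := by
  classical
  set S := Finset.univ.filter (fun j : Fin (N + 1) => y j ≤ t) with hS
  have hne : S.Nonempty := ⟨0, by simp [hS, h0]⟩
  refine ⟨S.max' hne, ?_, fun j hj => ?_⟩
  · have := S.max'_mem hne; simp [hS] at this; exact this
  · by_contra hc
    push_neg at hc
    exact absurd (S.le_max' j (by simp [hS, hc])) (not_le.mpr hj)

omit [LinearOrder T] in
lemma exists_min_ge' [LinearOrder T] (_hy : StrictMono y) (t : T)
    (h0 : t ≤ y (Fin.last N)) :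
    ∃ j₀ : Fin (N + 1), t ≤ y j₀ ∧ ∀ j, j < j₀ → y j < t := by
  classical
  set S := Finset.univ.filter (fun j : Fin (N + 1) => t ≤ y j) with hS
  have hne : S.Nonempty := ⟨Fin.last N, by simp [hS, h0]⟩
  refine ⟨S.min' hne, ?_, fun j hj => ?_⟩
  · have := S.min'_mem hne; simp [hS] at this; exact this
  · by_contra hc
    push_neg at hc
    exact absurd (S.min'_le j (by simp [hS, hc])) (not_le.mpr hj)

lemma sideAt_apply_point (hf : StrictMono f) (i : Fin (n + 1)) :
    sideAt f α βmid βlo βhi (f i) = α i := by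
  classical
  unfold sideAt
  rcases hfind : optFind (fun i' => f i' = f i) with _ | i'
  · exact absurd (optFind_eq_none_iff.mp hfind i) (by simp)
  · have : f i' = f i := optFind_spec (fun i' => f i' = f i) (Option.mem_def.mpr hfind)
    rw [hf.injective this]

lemma sideAt_apply_mid (hf : StrictMono f) (i : Fin n) (j : Fin (N + 1))
    (h1 : f i.castSucc < j) (h2 : j < f i.succ) :
    sideAt f α βmid βlo βhi j = βmid i := by
  classical
  unfold sideAt
  rcases hfind : optFind (fun i' => f i' = j) with _ | i'
  · simp only
    rw [if_neg (by exact not_lt.mpr ((hf.monotone (Fin.zero_le _)).trans h1.le)),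
      if_neg (by exact not_lt.mpr (h2.le.trans (hf.monotone (Fin.le_last _))))]
    rcases hfind2 : optFind (fun i' : Fin n => f i'.castSucc < j ∧ j < f i'.succ) with _ | i'
    · exact absurd (optFind_eq_none_iff.mp hfind2 i) (by simp [h1, h2])
    · have hsp := optFind_spec (fun i' : Fin n => f i'.castSucc < j ∧ j < f i'.succ)
        (Option.mem_def.mpr hfind2)
      rcases lt_trichotomy i' i with hlt | heq | hgt
      · have hle : i'.succ ≤ i.castSucc := by
          rw [Fin.le_def, Fin.val_succ, Fin.coe_castSucc]; exact hlt
        exact absurd (lt_trans hsp.2 (lt_of_le_of_lt (hf.monotone hle) h1)) (lt_irrefl j)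
      · rw [heq]
      · have hle : i.succ ≤ i'.castSucc := by
          rw [Fin.le_def, Fin.val_succ, Fin.coe_castSucc]; exact hgt
        exact absurd (lt_trans h2 (lt_of_le_of_lt (hf.monotone hle) hsp.1)) (lt_irrefl j)
  · have hsp : f i' = j := optFind_spec (fun i' => f i' = j) (Option.mem_def.mpr hfind)
    have hlt1 : i.castSucc < i' := hf.lt_iff_lt.mp (hsp ▸ h1)
    have hlt2 : i' < i.succ := hf.lt_iff_lt.mp (hsp ▸ h2)
    rw [Fin.lt_def, Fin.coe_castSucc] at hlt1
    rw [Fin.lt_def, Fin.val_succ] at hlt2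
    omega

lemma sideAt_apply_lo (hf : StrictMono f) (j : Fin (N + 1)) (h : j < f 0) :
    sideAt f α βmid βlo βhi j = βlo := by
  classical
  unfold sideAt
  rcases hfind : optFind (fun i' => f i' = j) with _ | i'
  · simp only
    rw [if_pos h]
  · have hsp : f i' = j := optFind_spec (fun i' => f i' = j) (Option.mem_def.mpr hfind)
    exact absurd (lt_of_le_of_lt (hf.monotone (Fin.zero_le i')) (hsp ▸ h)) (lt_irrefl _)

lemma sideAt_apply_hi (hf : StrictMono f) (j : Fin (N + 1)) (h : f (Fin.last n) < j) :
    sideAt f α βmid βlo βhi j = βhi := by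
  classical
  unfold sideAt
  rcases hfind : optFind (fun i' => f i' = j) with _ | i'
  · simp only
    rw [if_neg (by exact not_lt.mpr ((hf.monotone (Fin.zero_le _)).trans h.le)), if_pos h]
  · have hsp : f i' = j := optFind_spec (fun i' => f i' = j) (Option.mem_def.mpr hfind)
    exact absurd (lt_of_lt_of_le (hsp ▸ h) (hf.monotone (Fin.le_last i'))) (lt_irrefl _)

lemma sideBetween_apply_mid (hf : StrictMono f) (i : Fin n) (j : Fin N)
    (h1 : f i.castSucc ≤ j.castSucc) (h2 : j.succ ≤ f i.succ) :
    sideBetween f βmid βlo βhi j = βmid i := by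
  classical
  unfold sideBetween
  have hcs : (j.castSucc : Fin (N + 1)) < j.succ := Fin.castSucc_lt_succ (i := j)
  rw [if_neg, if_neg]
  · rcases hfind : optFind
        (fun i' : Fin n => f i'.castSucc ≤ j.castSucc ∧ j.succ ≤ f i'.succ) with _ | i'
    · exact absurd (optFind_eq_none_iff.mp hfind i) (by simp [h1, h2])
    · have hsp := optFind_spec
        (fun i' : Fin n => f i'.castSucc ≤ j.castSucc ∧ j.succ ≤ f i'.succ)
        (Option.mem_def.mpr hfind)
      rcases lt_trichotomy i' i with hlt | heq | hgt
      · have hle : i'.succ ≤ i.castSucc := by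
          rw [Fin.le_def, Fin.val_succ, Fin.coe_castSucc]; exact hlt
        exact absurd (hsp.2.trans ((hf.monotone hle).trans h1)) (not_le.mpr hcs)
      · rw [heq]
      · have hle : i.succ ≤ i'.castSucc := by
          rw [Fin.le_def, Fin.val_succ, Fin.coe_castSucc]; exact hgt
        exact absurd (h2.trans ((hf.monotone hle).trans hsp.1)) (not_le.mpr hcs)
  · exact not_le.mpr (lt_of_lt_of_le hcs (h2.trans (hf.monotone (Fin.le_last _))))
  · exact not_le.mpr (lt_of_le_of_lt ((hf.monotone (Fin.zero_le _)).trans h1) hcs)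

lemma sideBetween_apply_lo (j : Fin N) (h : j.succ ≤ f 0) :
    sideBetween f βmid βlo βhi j = βlo := by
  classical
  unfold sideBetween
  rw [if_pos h]

lemma sideBetween_apply_hi (j : Fin N) (h2 : ¬ j.succ ≤ f 0)
    (h : f (Fin.last n) ≤ j.castSucc) :
    sideBetween f βmid βlo βhi j = βhi := by
  classical
  unfold sideBetween
  rw [if_neg h2, if_pos h]

end
section
variable {σ T : Type} [LinearOrder T] {I : σ → Set T}
variable {n N : ℕ} {f : Fin (n + 1) → Fin (N + 1)} {y : Fin (N + 1) → T}
  {α : Fin (n + 1) → QF σ} {βmid : Fin n → QF σ} {βlo βhi : QF σ}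

lemma side_back (hy : StrictMono y) (hf : StrictMono f)
    (hpt : ∀ j, (sideAt f α βmid βlo βhi j).sat I (y j))
    (hint : ∀ j : Fin N, ∀ t, y j.castSucc < t → t < y j.succ →
      (sideBetween f βmid βlo βhi j).sat I t)
    (hlo : ∀ t, t < y 0 → βlo.sat I t)
    (hhi : ∀ t, y (Fin.last N) < t → βhi.sat I t) :
    (∀ i, (α i).sat I (y (f i))) ∧
    (∀ i : Fin n, ∀ t, y (f i.castSucc) < t → t < y (f i.succ) → (βmid i).sat I t) ∧
    (∀ t, t < y (f 0) → βlo.sat I t) ∧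
    (∀ t, y (f (Fin.last n)) < t → βhi.sat I t) := by
  refine ⟨fun i => ?_, fun i t h1 h2 => ?_, fun t ht => ?_, fun t ht => ?_⟩
  · have := hpt (f i)
    rwa [sideAt_apply_point hf i] at this
  · -- t in the open interval (y (f i.castSucc), y (f i.succ))
    have h0 : y 0 ≤ t := ((hy.monotone (Fin.zero_le _)).trans h1.le)
    obtain ⟨j₀, hle, hgt⟩ := exists_max_le' hy t h0
    rcases eq_or_lt_of_le hle with heq | hlt
    · -- t is the merged point j₀
      have hb1 : f i.castSucc < j₀ := hy.lt_iff_lt.mp (heq ▸ h1)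
      have hb2 : j₀ < f i.succ := hy.lt_iff_lt.mp (heq ▸ h2)
      have := hpt j₀
      rw [sideAt_apply_mid hf i j₀ hb1 hb2] at this
      rwa [heq] at this
    · -- t lies strictly inside merged interval j₀
      have hj₀lt : j₀ < f i.succ := hy.lt_iff_lt.mp (hlt.trans h2)
      have hjN : (j₀ : ℕ) < N := lt_of_lt_of_le hj₀lt (Fin.le_last _)
      set J : Fin N := ⟨j₀.val, hjN⟩ with hJ
      have hJcs : J.castSucc = j₀ := by simp [hJ]
      have hJsucc : j₀ < J.succ := by
        rw [Fin.lt_def, Fin.val_succ]; simp [hJ]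
      have ht2 : t < y J.succ := hgt _ hJsucc
      have hb1 : f i.castSucc ≤ J.castSucc := by
        rw [hJcs]
        by_contra hc
        push_neg at hc
        exact absurd (hgt _ hc) (not_lt.mpr h1.le)
      have hb2 : J.succ ≤ f i.succ := by
        rw [Fin.le_def, Fin.val_succ]; simp only [hJ]
        exact hj₀lt
      have := hint J t (by rwa [hJcs]) ht2
      rwa [sideBetween_apply_mid hf i J hb1 hb2] at this
  · rcases lt_or_ge t (y 0) with h | h
    · exact hlo t h
    · obtain ⟨j₀, hle, hgt⟩ := exists_max_le' hy t h
      have hj₀lt : j₀ < f 0 := hy.lt_iff_lt.mp (lt_of_le_of_lt hle ht)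
      rcases eq_or_lt_of_le hle with heq | hlt
      · have := hpt j₀
        rw [sideAt_apply_lo hf j₀ hj₀lt] at this
        rwa [heq] at this
      · have hjN : (j₀ : ℕ) < N := lt_of_lt_of_le hj₀lt (Fin.le_last _)
        set J : Fin N := ⟨j₀.val, hjN⟩ with hJ
        have hJcs : J.castSucc = j₀ := by simp [hJ]
        have hJsucc : j₀ < J.succ := by rw [Fin.lt_def, Fin.val_succ]; simp [hJ]
        have hb : J.succ ≤ f 0 := by
          rw [Fin.le_def, Fin.val_succ]; simp only [hJ]; exact hj₀lt
        have := hint J t (by rwa [hJcs]) (hgt _ hJsucc)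
        rwa [sideBetween_apply_lo J hb] at this
  · rcases lt_or_ge (y (Fin.last N)) t with h | h
    · exact hhi t h
    · obtain ⟨j₀, hle, hgt⟩ := exists_min_ge' hy t h
      have hj₀gt : f (Fin.last n) < j₀ := hy.lt_iff_lt.mp (lt_of_lt_of_le ht hle)
      rcases eq_or_lt_of_le hle with heq | hlt
      · have := hpt j₀
        rw [sideAt_apply_hi hf j₀ hj₀gt] at this
        rwa [← heq] at this
      · have hj₀pos : 0 < (j₀ : ℕ) := by
          rcases Nat.eq_zero_or_pos (j₀ : ℕ) with h0 | h0
          · exact absurd hj₀gt (by simp [Fin.lt_def, h0])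
          · exact h0
        have hjN : (j₀ : ℕ) - 1 < N := by
          have := j₀.isLt; omega
        set J : Fin N := ⟨(j₀ : ℕ) - 1, hjN⟩ with hJ
        have hJsucc : J.succ = j₀ := by
          rw [Fin.ext_iff, Fin.val_succ]; simp [hJ]; omega
        have hJcs : J.castSucc < j₀ := by
          rw [← hJsucc]; exact Fin.castSucc_lt_succ
        have hb2 : ¬ J.succ ≤ f 0 := by
          rw [hJsucc]
          exact not_le.mpr (lt_of_le_of_lt (hf.monotone (Fin.zero_le _)) hj₀gt)
        have hb : f (Fin.last n) ≤ J.castSucc := by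
          rw [Fin.le_def, Fin.coe_castSucc]; simp only [hJ]
          have := Fin.lt_def.mp hj₀gt
          omega
        have := hint J t (hgt _ hJcs) (by rwa [hJsucc])
        rwa [sideBetween_apply_hi J hb2 hb] at this

end
section
variable {σ T : Type} [LinearOrder T] {I : σ → Set T} {m : ℕ}

lemma merge_back {e₁ e₂ : EAForm σ m} {N : ℕ} {f : Fin (e₁.n + 1) → Fin (N + 1)}
    {g : Fin (e₂.n + 1) → Fin (N + 1)} (h : goodPat e₁ e₂ N f g)
    {z : Fin (m + 1) → T} (hs : (mergeForm e₁ e₂ N f g).sat I z) :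
    e₁.sat I z ∧ e₂.sat I z := by
  obtain ⟨hf, hg, _hsurj, hidx⟩ := h
  obtain ⟨y, hy, hz, hα, hmid, hlo, hhi⟩ := hs
  have hα₁ : ∀ j, (sideAt f e₁.α e₁.βmid e₁.βlo e₁.βhi j).sat I (y j) := fun j => (hα j).1
  have hα₂ : ∀ j, (sideAt g e₂.α e₂.βmid e₂.βlo e₂.βhi j).sat I (y j) := fun j => (hα j).2
  have hmid₁ : ∀ j : Fin N, ∀ t, y j.castSucc < t → t < y j.succ →
      (sideBetween f e₁.βmid e₁.βlo e₁.βhi j).sat I t := fun j t h1 h2 => (hmid j t h1 h2).1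
  have hmid₂ : ∀ j : Fin N, ∀ t, y j.castSucc < t → t < y j.succ →
      (sideBetween g e₂.βmid e₂.βlo e₂.βhi j).sat I t := fun j t h1 h2 => (hmid j t h1 h2).2
  have hlo₁ : ∀ t, t < y 0 → e₁.βlo.sat I t := fun t ht => (hlo t ht).1
  have hlo₂ : ∀ t, t < y 0 → e₂.βlo.sat I t := fun t ht => (hlo t ht).2
  have hhi₁ : ∀ t, y (Fin.last N) < t → e₁.βhi.sat I t := fun t ht => (hhi t ht).1
  have hhi₂ : ∀ t, y (Fin.last N) < t → e₂.βhi.sat I t := fun t ht => (hhi t ht).2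
  obtain ⟨c₁, d₁, l₁, u₁⟩ := side_back hy hf hα₁ hmid₁ hlo₁ hhi₁
  obtain ⟨c₂, d₂, l₂, u₂⟩ := side_back hy hg hα₂ hmid₂ hlo₂ hhi₂
  constructor
  · exact ⟨y ∘ f, hy.comp hf, fun k => hz k, c₁, d₁, l₁, u₁⟩
  · refine ⟨y ∘ g, hy.comp hg, fun k => ?_, c₂, d₂, l₂, u₂⟩
    have := hz k
    simp only [mergeForm] at this
    exact this.trans (congrArg y (hidx k))

lemma merge_fwd {e₁ e₂ : EAForm σ m} {z : Fin (m + 1) → T}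
    (hs₁ : e₁.sat I z) (hs₂ : e₂.sat I z) :
    ∃ (N : ℕ) (f : Fin (e₁.n + 1) → Fin (N + 1)) (g : Fin (e₂.n + 1) → Fin (N + 1)),
      N < e₁.n + e₂.n + 2 ∧ goodPat e₁ e₂ N f g ∧ (mergeForm e₁ e₂ N f g).sat I z := by
  classical
  obtain ⟨x₁, hx₁, hz₁, hα₁, hmid₁, hlo₁, hhi₁⟩ := hs₁
  obtain ⟨x₂, hx₂, hz₂, hα₂, hmid₂, hlo₂, hhi₂⟩ := hs₂
  set S : Finset T := (Finset.univ.image x₁) ∪ (Finset.univ.image x₂) with hS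
  have hmem₁ : ∀ i, x₁ i ∈ S := fun i => by simp [hS]
  have hmem₂ : ∀ i, x₂ i ∈ S := fun i => by simp [hS]
  have hpos : 0 < S.card := Finset.card_pos.mpr ⟨x₁ 0, hmem₁ 0⟩
  obtain ⟨N, hN⟩ : ∃ N, S.card = N + 1 := ⟨S.card - 1, by omega⟩
  have hNbound : N < e₁.n + e₂.n + 2 := by
    have h1 : S.card ≤ (e₁.n + 1) + (e₂.n + 1) := by
      calc S.card ≤ (Finset.univ.image x₁).card + (Finset.univ.image x₂).card :=
            Finset.card_union_le _ _
        _ ≤ (e₁.n + 1) + (e₂.n + 1) := by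
            gcongr
            · exact le_trans Finset.card_image_le (by simp)
            · exact le_trans Finset.card_image_le (by simp)
    omega
  set iso := S.orderIsoOfFin hN with hiso
  set y : Fin (N + 1) → T := fun j => (iso j : T) with hy'
  have hy : StrictMono y := fun a b hab => by
    have := iso.strictMono hab
    exact this
  set f : Fin (e₁.n + 1) → Fin (N + 1) := fun i => iso.symm ⟨x₁ i, hmem₁ i⟩ with hf'
  set g : Fin (e₂.n + 1) → Fin (N + 1) := fun i => iso.symm ⟨x₂ i, hmem₂ i⟩ with hg'
  have hyf : ∀ i, y (f i) = x₁ i := fun i => by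
    simp [hy', hf', OrderIso.apply_symm_apply]
  have hyg : ∀ i, y (g i) = x₂ i := fun i => by
    simp [hy', hg', OrderIso.apply_symm_apply]
  have hf : StrictMono f := fun a b hab => by
    have : (⟨x₁ a, hmem₁ a⟩ : {t // t ∈ S}) < ⟨x₁ b, hmem₁ b⟩ := by
      simpa [Subtype.mk_lt_mk] using hx₁ hab
    exact iso.symm.strictMono this
  have hg : StrictMono g := fun a b hab => by
    have : (⟨x₂ a, hmem₂ a⟩ : {t // t ∈ S}) < ⟨x₂ b, hmem₂ b⟩ := by
      simpa [Subtype.mk_lt_mk] using hx₂ hab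
    exact iso.symm.strictMono this
  have hsurj : ∀ j, (∃ i, f i = j) ∨ (∃ i, g i = j) := by
    intro j
    have hjS : (iso j : T) ∈ S := (iso j).2
    simp only [hS, Finset.mem_union, Finset.mem_image, Finset.mem_univ, true_and] at hjS
    rcases hjS with ⟨i, hi⟩ | ⟨i, hi⟩
    · left
      exact ⟨i, hy.injective (by rw [hyf i]; exact hi)⟩
    · right
      exact ⟨i, hy.injective (by rw [hyg i]; exact hi)⟩
  have hidx : ∀ k, f (e₁.idx k) = g (e₂.idx k) := by
    intro k
    apply hy.injective
    rw [hyf, hyg, ← hz₁ k, ← hz₂ k]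
  refine ⟨N, f, g, hNbound, ⟨hf, hg, hsurj, hidx⟩, ?_⟩
  -- satisfy the merged formula with the merged point sequence y
  refine ⟨y, hy, fun k => ?_, fun j => ?_, fun j t h1 h2 => ?_, fun t ht => ?_, fun t ht => ?_⟩
  · show z k = y (f (e₁.idx k))
    rw [hyf, hz₁ k]
  · constructor
    · exact sideAt_sat_fwd hy (fun i => (hyf i) ▸ hα₁ i)
        (fun i t h1 h2 => hmid₁ i t (by rwa [hyf] at h1) (by rwa [hyf] at h2))
        (fun t ht => hlo₁ t (by rwa [hyf] at ht))
        (fun t ht => hhi₁ t (by rwa [hyf] at ht)) j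
    · exact sideAt_sat_fwd hy (fun i => (hyg i) ▸ hα₂ i)
        (fun i t h1 h2 => hmid₂ i t (by rwa [hyg] at h1) (by rwa [hyg] at h2))
        (fun t ht => hlo₂ t (by rwa [hyg] at ht))
        (fun t ht => hhi₂ t (by rwa [hyg] at ht)) j
  · constructor
    · exact sideBetween_sat_fwd hy
        (fun i t h1 h2 => hmid₁ i t (by rwa [hyf] at h1) (by rwa [hyf] at h2))
        (fun t ht => hlo₁ t (by rwa [hyf] at ht))
        (fun t ht => hhi₁ t (by rwa [hyf] at ht)) j t h1 h2
    · exact sideBetween_sat_fwd hy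
        (fun i t h1 h2 => hmid₂ i t (by rwa [hyg] at h1) (by rwa [hyg] at h2))
        (fun t ht => hlo₂ t (by rwa [hyg] at ht))
        (fun t ht => hhi₂ t (by rwa [hyg] at ht)) j t h1 h2
  · exact ⟨hlo₁ t (lt_of_lt_of_le ht (by rw [← hyf 0]; exact hy.monotone (Fin.zero_le _))),
      hlo₂ t (lt_of_lt_of_le ht (by rw [← hyg 0]; exact hy.monotone (Fin.zero_le _)))⟩
  · exact ⟨hhi₁ t (lt_of_le_of_lt (by rw [← hyf (Fin.last _)]; exact hy.monotone (Fin.le_last _)) ht),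
      hhi₂ t (lt_of_le_of_lt (by rw [← hyg (Fin.last _)]; exact hy.monotone (Fin.le_last _)) ht)⟩

lemma conjPair_equiv (e₁ e₂ : EAForm σ m) (z : Fin (m + 1) → T) :
    (e₁.sat I z ∧ e₂.sat I z) ↔ EADisj (conjList e₁ e₂) I z := by
  classical
  constructor
  · rintro ⟨hs₁, hs₂⟩
    obtain ⟨N, f, g, hN, hgood, hsat⟩ := merge_fwd hs₁ hs₂
    exact ⟨_, mergeForm_mem_conjList e₁ e₂ N hN f g hgood, hsat⟩
  · rintro ⟨e, he, hsat⟩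
    simp only [conjList, List.mem_flatMap, List.mem_range, List.mem_map, Finset.mem_toList,
      Finset.mem_filter, Finset.mem_univ, true_and] at he
    obtain ⟨N, _, ⟨f, g⟩, hgood, rfl⟩ := he
    exact merge_back hgood hsat

end
/-- D∃∀ formulas (disjunctions of ∃∀-formulas) are closed under
disjunction, conjunction, and existential quantification. -/
theorem dea_closure (σ : Type) :
    (∀ (m : ℕ) (L₁ L₂ : List (EAForm σ m)), ∃ L : List (EAForm σ m),
      ∀ (T : Type) [LinearOrder T] (I : σ → Set T) (z : Fin (m + 1) → T),
        (EADisj L₁ I z ∨ EADisj L₂ I z) ↔ EADisj L I z) ∧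
    (∀ (m : ℕ) (L₁ L₂ : List (EAForm σ m)), ∃ L : List (EAForm σ m),
      ∀ (T : Type) [LinearOrder T] (I : σ → Set T) (z : Fin (m + 1) → T),
        (EADisj L₁ I z ∧ EADisj L₂ I z) ↔ EADisj L I z) ∧
    (∀ (m : ℕ) (L₁ : List (EAForm σ (m + 1))) (k : Fin (m + 2)),
      ∃ L : List (EAForm σ m),
        ∀ (T : Type) [LinearOrder T] (I : σ → Set T) (z : Fin (m + 1) → T),
          (∃ t : T, EADisj L₁ I (Fin.insertNth k t z)) ↔ EADisj L I z) := by
  refine ⟨?_, ?_, ?_⟩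
  · -- disjunction: concatenate the lists
    intro m L₁ L₂
    refine ⟨L₁ ++ L₂, fun T _ I z => ?_⟩
    constructor
    · rintro (⟨f, hf, hs⟩ | ⟨f, hf, hs⟩) <;>
        exact ⟨f, List.mem_append.mpr (by tauto), hs⟩
    · rintro ⟨f, hf, hs⟩
      rcases List.mem_append.mp hf with h | h
      exacts [Or.inl ⟨f, h, hs⟩, Or.inr ⟨f, h, hs⟩]
  · -- conjunction: merge pairwise
    intro m L₁ L₂
    refine ⟨L₁.flatMap (fun e₁ => L₂.flatMap (fun e₂ => conjList e₁ e₂)), fun T _ I z => ?_⟩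
    constructor
    · rintro ⟨⟨e₁, h₁, hs₁⟩, ⟨e₂, h₂, hs₂⟩⟩
      obtain ⟨e, he, hs⟩ := (conjPair_equiv e₁ e₂ z).mp ⟨hs₁, hs₂⟩
      exact ⟨e, List.mem_flatMap.mpr ⟨e₁, h₁, List.mem_flatMap.mpr ⟨e₂, h₂, he⟩⟩, hs⟩
    · rintro ⟨e, he, hs⟩
      obtain ⟨e₁, h₁, he⟩ := List.mem_flatMap.mp he
      obtain ⟨e₂, h₂, he⟩ := List.mem_flatMap.mp he
      have := (conjPair_equiv e₁ e₂ z).mpr ⟨e, he, hs⟩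
      exact ⟨⟨e₁, h₁, this.1⟩, ⟨e₂, h₂, this.2⟩⟩
  · -- existential quantification: reindex the free variables
    intro m L₁ k
    refine ⟨L₁.map (fun e => { e with idx := fun j => e.idx (k.succAbove j) }),
      fun T _ I z => ?_⟩
    constructor
    · rintro ⟨t, e, he, hs⟩
      refine ⟨_, List.mem_map.mpr ⟨e, he, rfl⟩, ?_⟩
      obtain ⟨x, hx, hz, hα, hmid, hlo, hhi⟩ := hs
      refine ⟨x, hx, fun j => ?_, hα, hmid, hlo, hhi⟩
      have := hz (k.succAbove j)
      rwa [Fin.insertNth_apply_succAbove] at this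
    · rintro ⟨e', he', hs⟩
      obtain ⟨e, he, rfl⟩ := List.mem_map.mp he'
      obtain ⟨x, hx, hz, hα, hmid, hlo, hhi⟩ := hs
      refine ⟨x (e.idx k), e, he, x, hx, ?_, hα, hmid, hlo, hhi⟩
      rw [Fin.forall_iff_succAbove k]
      constructor
      · rw [Fin.insertNth_apply_same]
      · intro j
        rw [Fin.insertNth_apply_succAbove]
        exact hz j
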